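/- Let m ≥ 1, let D_1, …, D_m ≥ 1 with n = D_1 + ⋯ + D_m, and let a ≥ 1. Let v : {1,…,n} → {1,…,m} be the sorted deck (D_1 values equal to 1, then D_2 values equal to 2, …, then D_m values equal to m). Then the separation distance after an a-shuffle of v, namely SEP(a) = max_w (1 − C(n; D_1,…,D_m)·Q_a^v(w)) where the maximum is over all decks w with exactly D_i entries equal to i, satisfies SEP(a) = 1 − a^{−n}·C(n; D_1,…,D_m)·∑_{0 = k_0 < k_1 < ⋯ < k_{m−1} < a} (a − k_{m−1})^{D_m} · ∏_{j=1}^{m−1} ((k_j − k_{j−1})^{D_j} − (k_j − k_{j−1} − 1)^{D_j}), where the sum is over integer sequences 0 = k_0 < k_1 < ⋯ < k_{m−1} < a. -/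

import Mathlib

/-- `σ` is the stable-sort permutation of `f`: `f ∘ σ` is weakly increasing and `σ` is
increasing on each level set of `f ∘ σ`. -/
def IsStableSort {n a : ℕ} (f : Fin n → Fin a) (σ : Equiv.Perm (Fin n)) : Prop :=
  Monotone (f ∘ σ) ∧ ∀ i j : Fin n, i < j → f (σ i) = f (σ j) → σ i < σ j

/-- The separation distance after an `a`-shuffle of the sorted deck with `D_i` cards
labelled `i` equals
`1 - a^{-n}·C(n;D_1,…,D_m)·∑_{0=k_0<k_1<⋯<k_{m-1}<a} (a-k_{m-1})^{D_m}
  ∏_{j=1}^{m-1} ((k_j-k_{j-1})^{D_j} - (k_j-k_{j-1}-1)^{D_j})`,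
where `SEP(a) = max_w (1 - C(n;D_1,…,D_m)·Q_a^v(w))`, the maximum being over all decks `w`
with the same multiset of labels. -/
lemma mono_key {n m : ℕ} {g : Fin n → Fin m} (hg : Monotone g) (i : Fin n) (c : Fin m) :
    g i ≤ c ↔ (i : ℕ) < (Finset.univ.filter fun p => g p ≤ c).card := by
  constructor
  · intro h
    have hsub : Finset.Iic i ⊆ Finset.univ.filter fun p => g p ≤ c := by
      intro j hj
      simp only [Finset.mem_Iic] at hj
      exact Finset.mem_filter.mpr ⟨Finset.mem_univ _, le_trans (hg hj) h⟩
    have := Finset.card_le_card hsub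
    rw [Fin.card_Iic] at this
    omega
  · intro h
    by_contra hc
    push_neg at hc
    have hsub : (Finset.univ.filter fun p => g p ≤ c) ⊆ Finset.Iio i := by
      intro j hj
      simp only [Finset.mem_filter] at hj
      rw [Finset.mem_Iio]
      by_contra hji
      push_neg at hji
      exact absurd (le_trans (hg hji) hj.2) (not_le.mpr hc)
    have := Finset.card_le_card hsub
    rw [Fin.card_Iio] at this
    omega

lemma mono_unique {n m : ℕ} {g h : Fin n → Fin m} (hg : Monotone g) (hh : Monotone h)
    (hcard : ∀ c, (Finset.univ.filter fun p => g p = c).card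
      = (Finset.univ.filter fun p => h p = c).card) :
    g = h := by
  have e1 : ∀ (u : Fin n → Fin m), ∀ c, (Finset.univ.filter fun p => u p ≤ c).card
      = ∑ c' ∈ Finset.Iic c, (Finset.univ.filter fun p => u p = c').card := by
    intro u c
    rw [Finset.card_eq_sum_card_fiberwise (f := u) (t := Finset.Iic c)
      (fun x hx => Finset.mem_Iic.mpr (Finset.mem_filter.mp hx).2)]
    refine Finset.sum_congr rfl fun b hb => ?_
    congr 1
    rw [Finset.filter_filter]
    apply Finset.filter_congr
    intro p _
    simp only [Finset.mem_Iic] at hb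
    constructor
    · exact fun hp => hp.2
    · exact fun hp => ⟨hp ▸ hb, hp⟩
  have key : ∀ c, (Finset.univ.filter fun p => g p ≤ c).card
      = (Finset.univ.filter fun p => h p ≤ c).card := by
    intro c
    rw [e1 g c, e1 h c]
    exact Finset.sum_congr rfl fun b _ => hcard b
  funext i
  apply le_antisymm
  · refine (mono_key hg i (h i)).mpr ?_
    rw [key]
    exact (mono_key hh i (h i)).mp le_rfl
  · refine (mono_key hh i (g i)).mpr ?_
    rw [← key]
    exact (mono_key hg i (g i)).mp le_rfl


lemma stable_lex {n a : ℕ} {f : Fin n → Fin a} {σ : Equiv.Perm (Fin n)}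
    (h : IsStableSort f σ) {i j : Fin n} (hij : i < j) :
    f (σ i) < f (σ j) ∨ (f (σ i) = f (σ j) ∧ σ i < σ j) := by
  rcases lt_or_eq_of_le (h.1 hij.le) with h1 | h1
  · exact Or.inl h1
  · exact Or.inr ⟨h1, h.2 i j hij h1⟩

lemma mono_comp_iff {n m a : ℕ} {f : Fin n → Fin a} {σ : Equiv.Perm (Fin n)}
    (h : IsStableSort f σ) (w : Fin n → Fin m) :
    Monotone (w ∘ σ) ↔ ∀ p q : Fin n, w q < w p → (f q < f p ∨ (f q = f p ∧ q < p)) := by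
  constructor
  · intro hw p q hpq
    by_contra hcon
    push_neg at hcon
    obtain ⟨h1, h2⟩ := hcon
    have hij : σ.symm p ≤ σ.symm q := by
      by_contra hji
      push_neg at hji
      have hl := stable_lex h hji
      rw [Equiv.apply_symm_apply, Equiv.apply_symm_apply] at hl
      rcases hl with hl | ⟨he, hl⟩
      · exact absurd hl (not_lt.mpr h1)
      · exact absurd hl (not_lt.mpr (h2 he))
    have hle : w (σ (σ.symm p)) ≤ w (σ (σ.symm q)) := hw hij
    rw [Equiv.apply_symm_apply, Equiv.apply_symm_apply] at hle
    exact absurd hle (not_le.mpr hpq)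
  · intro hc i j hij
    rcases eq_or_lt_of_le hij with rfl | hlt
    · exact le_rfl
    · by_contra hwij
      push_neg at hwij
      simp only [Function.comp_apply] at hwij
      have hd := hc (σ i) (σ j) hwij
      have hl := stable_lex h hlt
      rcases hd with h1 | ⟨h1, h2⟩ <;> rcases hl with h3 | ⟨h3, h4⟩
      · exact absurd h3 (not_lt.mpr h1.le)
      · exact absurd h1 (by rw [h3]; exact lt_irrefl _)
      · exact absurd h3 (by rw [h1]; exact lt_irrefl _)
      · exact absurd h4 (not_lt.mpr h2.le)

lemma fiber_comp {n m : ℕ} (w : Fin n → Fin m) (e : Equiv.Perm (Fin n)) (c : Fin m) :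
    (Finset.univ.filter fun p => w (e p) = c).card
      = (Finset.univ.filter fun p => w p = c).card := by
  apply Finset.card_bij (fun p _ => e p)
  · intro p hp
    simp only [Finset.mem_filter, Finset.mem_univ, true_and] at hp ⊢
    exact hp
  · intro p _ q _ hpq
    exact e.injective hpq
  · intro q hq
    simp only [Finset.mem_filter, Finset.mem_univ, true_and] at hq ⊢
    exact ⟨e.symm q, by simpa using hq, by simp⟩

lemma card_window (a l u : ℕ) (hu : u ≤ a) :
    (Finset.univ.filter fun x : Fin a => l ≤ (x : ℕ) ∧ (x : ℕ) < u).card = u - l := by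
  obtain rfl | hpos := Nat.eq_zero_or_pos a
  · have hu0 : u = 0 := by omega
    subst hu0
    simp [Finset.univ_eq_empty]
  rw [← Nat.card_Ico l u]
  refine Finset.card_nbij' (fun x => (x : ℕ))
    (fun y => if h : y < a then ⟨y, h⟩ else ⟨0, hpos⟩) ?_ ?_ ?_ ?_
  · intro x hx
    simp only [Finset.mem_coe, Finset.mem_filter, Finset.mem_univ, true_and] at hx
    simp only [Finset.mem_coe, Finset.mem_Ico]
    exact hx
  · intro y hy
    simp only [Finset.mem_coe, Finset.mem_Ico] at hy
    have hya : y < a := by omega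
    simp only [hya, dif_pos, Finset.mem_coe, Finset.mem_filter, Finset.mem_univ, true_and]
    exact ⟨hy.1, hy.2⟩
  · intro x hx
    simp only [Fin.is_lt, dif_pos]
  · intro y hy
    simp only [Finset.mem_coe, Finset.mem_Ico] at hy
    have hya : y < a := by omega
    simp only [hya, dif_pos]

lemma card_pi_mem {B : Type*} [Fintype B] [DecidableEq B] {a : ℕ} (s : Finset (Fin a)) :
    (Finset.univ.filter fun h : B → Fin a => ∀ p, h p ∈ s).card
      = s.card ^ (Fintype.card B) := by
  have he : (Finset.univ.filter fun h : B → Fin a => ∀ p, h p ∈ s)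
      = Fintype.piFinset (fun _ => s) := by
    ext h
    simp [Fintype.mem_piFinset]
  rw [he, Fintype.card_piFinset]
  simp [Finset.prod_const]

lemma card_block {B : Type*} [Fintype B] [DecidableEq B] [Nonempty B] {a : ℕ} (l u : ℕ)
    (hu : u ≤ a) :
    (Finset.univ.filter fun h : B → Fin a =>
      (∀ p, l ≤ (h p : ℕ)) ∧ (∀ p, (h p : ℕ) < u) ∧ (∃ p, (h p : ℕ) = u - 1)).card
    = (u - l) ^ Fintype.card B - (u - l - 1) ^ Fintype.card B := by
  classical
  set s : Finset (Fin a) := Finset.univ.filter fun x : Fin a => l ≤ (x : ℕ) ∧ (x : ℕ) < u with hs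
  set s' : Finset (Fin a) := Finset.univ.filter fun x : Fin a => l ≤ (x : ℕ) ∧ (x : ℕ) < u - 1 with hs'
  have hA : (Finset.univ.filter fun h : B → Fin a =>
      (∀ p, l ≤ (h p : ℕ)) ∧ (∀ p, (h p : ℕ) < u) ∧ (∃ p, (h p : ℕ) = u - 1))
      = (Finset.univ.filter fun h : B → Fin a => ∀ p, h p ∈ s)
        \ (Finset.univ.filter fun h : B → Fin a => ∀ p, h p ∈ s') := by
    ext h
    simp only [Finset.mem_sdiff, Finset.mem_filter, Finset.mem_univ, true_and, hs, hs']
    constructor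
    · rintro ⟨h1, h2, p, hp⟩
      refine ⟨fun q => ⟨h1 q, h2 q⟩, fun hall => ?_⟩
      have := (hall p).2
      omega
    · rintro ⟨h1, h2⟩
      push_neg at h2
      obtain ⟨p, hp⟩ := h2
      refine ⟨fun q => (h1 q).1, fun q => (h1 q).2, p, ?_⟩
      have h3 := h1 p
      have h4 := hp (h1 p).1
      omega
  have hsub : (Finset.univ.filter fun h : B → Fin a => ∀ p, h p ∈ s')
      ⊆ (Finset.univ.filter fun h : B → Fin a => ∀ p, h p ∈ s) := by
    intro h hh
    simp only [Finset.mem_filter, Finset.mem_univ, true_and, hs, hs'] at hh ⊢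
    intro p
    have := hh p
    omega
  rw [hA, Finset.card_sdiff_of_subset hsub, card_pi_mem, card_pi_mem, hs, hs', card_window a l u hu,
    card_window a l (u - 1) (by omega)]
  have he1 : u - 1 - l = u - l - 1 := by omega
  rw [he1]

lemma card_block_last {B : Type*} [Fintype B] [DecidableEq B] {a : ℕ} (l : ℕ) :
    (Finset.univ.filter fun h : B → Fin a => ∀ p, l ≤ (h p : ℕ)).card
      = (a - l) ^ Fintype.card B := by
  classical
  have he : (Finset.univ.filter fun h : B → Fin a => ∀ p, l ≤ (h p : ℕ))
      = (Finset.univ.filter fun h : B → Fin a =>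
          ∀ p, h p ∈ Finset.univ.filter fun x : Fin a => l ≤ (x : ℕ) ∧ (x : ℕ) < a) := by
    ext h
    simp only [Finset.mem_filter, Finset.mem_univ, true_and]
    exact ⟨fun h1 p => ⟨h1 p, (h p).isLt⟩, fun h1 p => (h1 p).1⟩
  rw [he, card_pi_mem, card_window a l a le_rfl]

lemma card_restrict {n mm a : ℕ} (v : Fin n → Fin mm)
    (Q : ∀ c : Fin mm, ({p : Fin n // v p = c} → Fin a) → Prop) [∀ c h, Decidable (Q c h)] :
    (Finset.univ.filter fun f : Fin n → Fin a => ∀ c, Q c (fun p => f p.1)).card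
    = ∏ c, (Finset.univ.filter fun h : {p : Fin n // v p = c} → Fin a => Q c h).card := by
  classical
  rw [← Fintype.card_piFinset]
  have key : ∀ (g : ∀ c : Fin mm, {p : Fin n // v p = c} → Fin a) (c : Fin mm),
      (fun p : {p : Fin n // v p = c} => g (v p.1) ⟨p.1, rfl⟩) = g c := by
    intro g c
    funext p
    obtain ⟨p, hp⟩ := p
    subst hp
    rfl
  apply Finset.card_bij' (fun f _ => fun c (p : {p : Fin n // v p = c}) => f p.1)
    (fun g _ => fun p => g (v p) ⟨p, rfl⟩)
  · intro f hf
    simp only [Finset.mem_filter, Finset.mem_univ, true_and] at hf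
    rw [Fintype.mem_piFinset]
    intro c
    simp only [Finset.mem_filter, Finset.mem_univ, true_and]
    exact hf c
  · intro g hg
    rw [Fintype.mem_piFinset] at hg
    simp only [Finset.mem_filter, Finset.mem_univ, true_and]
    intro c
    rw [key g c]
    have := hg c
    simp only [Finset.mem_filter, Finset.mem_univ, true_and] at this
    exact this
  · intro f hf; rfl
  · intro g hg
    funext c
    exact key g c

def Qpred {m' n a : ℕ} (v : Fin n → Fin (m' + 1)) (k : Fin (m' + 1) → Fin a)
    (c : Fin (m' + 1)) (h : {p : Fin n // v p = c} → Fin a) : Prop :=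
  (∀ p, (k c : ℕ) ≤ (h p : ℕ)) ∧ ∀ _hc : (c : ℕ) < m',
    ((∀ p, (h p : ℕ) < (k ⟨(c : ℕ) + 1, by omega⟩ : ℕ)) ∧
     (∃ p, (h p : ℕ) = (k ⟨(c : ℕ) + 1, by omega⟩ : ℕ) - 1))

instance {m' n a : ℕ} (v : Fin n → Fin (m' + 1)) (k : Fin (m' + 1) → Fin a)
    (c : Fin (m' + 1)) (h : {p : Fin n // v p = c} → Fin a) : Decidable (Qpred v k c h) := by
  unfold Qpred; infer_instance


lemma count_T {m' n a : ℕ} (ha : 1 ≤ a) (D : Fin (m' + 1) → ℕ) (hD : ∀ c, 1 ≤ D c)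
    (v : Fin n → Fin (m' + 1))
    (hvD : ∀ c, (Finset.univ.filter fun p => v p = c).card = D c) :
    (Finset.univ.filter fun f : Fin n → Fin a => ∀ p q : Fin n, v p < v q → f p < f q).card
    = ∑ k ∈ Finset.univ.filter (fun k : Fin (m' + 1) → Fin a => k 0 = ⟨0, ha⟩ ∧ StrictMono k),
        (a - (k (Fin.last m') : ℕ)) ^ (D (Fin.last m')) *
          ∏ j : Fin m', (((k j.succ : ℕ) - (k j.castSucc : ℕ)) ^ (D j.castSucc)
            - ((k j.succ : ℕ) - (k j.castSucc : ℕ) - 1) ^ (D j.castSucc)) := by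
  classical
  have hbne : ∀ c, (Finset.univ.filter fun p => v p = c).Nonempty := fun c =>
    Finset.card_pos.mp (by rw [hvD c]; exact hD c)
  set T : Finset (Fin n → Fin a) :=
    Finset.univ.filter fun f : Fin n → Fin a => ∀ p q : Fin n, v p < v q → f p < f q with hT
  set K : Finset (Fin (m' + 1) → Fin a) :=
    Finset.univ.filter (fun k : Fin (m' + 1) → Fin a => k 0 = ⟨0, ha⟩ ∧ StrictMono k) with hK
  set Mx : (Fin n → Fin a) → Fin (m' + 1) → ℕ := fun f c =>
    ((Finset.univ.filter fun p => v p = c).image fun p => (f p : ℕ)).max'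
      ((hbne c).image _) with hMxdef
  have hMx_mem : ∀ f c, ∃ p, v p = c ∧ (f p : ℕ) = Mx f c := by
    intro f c
    have this : Mx f c ∈ (Finset.univ.filter fun p => v p = c).image fun p => (f p : ℕ) :=
      Finset.max'_mem _ _
    rw [Finset.mem_image] at this
    obtain ⟨p, hp, hfp⟩ := this
    exact ⟨p, (Finset.mem_filter.mp hp).2, hfp⟩
  have hMx_le : ∀ f c p, v p = c → (f p : ℕ) ≤ Mx f c := by
    intro f c p hp
    have hmem : (f p : ℕ) ∈ (Finset.univ.filter fun q => v q = c).image fun q => (f q : ℕ) :=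
      Finset.mem_image.mpr ⟨p, Finset.mem_filter.mpr ⟨Finset.mem_univ _, hp⟩, rfl⟩
    exact Finset.le_max' _ _ hmem
  have hMx_lt_a : ∀ f c, Mx f c < a := by
    intro f c
    obtain ⟨p, _, hfp⟩ := hMx_mem f c
    rw [← hfp]
    exact (f p).isLt
  have hMx_mono : ∀ f, f ∈ T → ∀ c d : Fin (m' + 1), c < d → Mx f c < Mx f d := by
    intro f hf c d hcd
    rw [hT, Finset.mem_filter] at hf
    obtain ⟨p, hpc, hfp⟩ := hMx_mem f c
    obtain ⟨q, hqd, hfq⟩ := hMx_mem f d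
    rw [← hfp, ← hfq]
    exact hf.2 p q (by rw [hpc, hqd]; exact hcd)
  have hlt_blocks : ∀ f, (∀ p q : Fin n, v p < v q → f p < f q) →
      ∀ (c d : Fin (m' + 1)) (p : Fin n), v p = d → c < d → Mx f c < (f p : ℕ) := by
    intro f hfT c d p hpd hcd
    refine (Finset.max'_lt_iff _ _).mpr ?_
    intro y hy
    rw [Finset.mem_image] at hy
    obtain ⟨q, hq, rfl⟩ := hy
    exact hfT q p (by rw [(Finset.mem_filter.mp hq).2, hpd]; exact hcd)
  set κ : (Fin n → Fin a) → Fin (m' + 1) → Fin a := fun f =>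
    Fin.cases ⟨0, ha⟩ (fun j => ⟨min (Mx f j.castSucc + 1) (a - 1), by omega⟩) with hκdef
  have hκ0 : ∀ f, κ f 0 = ⟨0, ha⟩ := fun f => rfl
  have hκsucc_val : ∀ f (j : Fin m'), (κ f j.succ : ℕ) = min (Mx f j.castSucc + 1) (a - 1) := by
    intro f j
    rw [hκdef]
    simp only [Fin.cases_succ]
  have htrunc : ∀ f, f ∈ T → ∀ j : Fin m', Mx f j.castSucc + 1 ≤ a - 1 := by
    intro f hf j
    have h1 : Mx f j.castSucc < Mx f (Fin.last m') :=
      hMx_mono f hf _ _ (Fin.castSucc_lt_last j)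
    have h2 := hMx_lt_a f (Fin.last m')
    omega
  have hκsucc : ∀ f, f ∈ T → ∀ j : Fin m', (κ f j.succ : ℕ) = Mx f j.castSucc + 1 := by
    intro f hf j
    rw [hκsucc_val f j]
    have := htrunc f hf j
    omega
  have hκK : ∀ f, f ∈ T → κ f ∈ K := by
    intro f hf
    rw [hK, Finset.mem_filter]
    refine ⟨Finset.mem_univ _, hκ0 f, ?_⟩
    intro x y hxy
    cases x using Fin.cases with
    | zero =>
      cases y using Fin.cases with
      | zero => exact absurd hxy (lt_irrefl _)
      | succ j =>
        rw [Fin.lt_def, hκsucc f hf j]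
        have h1 : (κ f 0 : ℕ) = 0 := rfl
        omega
    | succ i =>
      cases y using Fin.cases with
      | zero => exact absurd hxy (Fin.not_lt_zero _)
      | succ j =>
        rw [Fin.lt_def, hκsucc f hf i, hκsucc f hf j]
        have hij : i.castSucc < j.castSucc := by
          rw [Fin.castSucc_lt_castSucc_iff]
          exact Fin.succ_lt_succ_iff.mp hxy
        have := hMx_mono f hf _ _ hij
        omega
  rw [Finset.card_eq_sum_card_fiberwise (f := κ) (t := K) (fun f hf => hκK f hf)]
  refine Finset.sum_congr rfl ?_
  intro k hk
  rw [hK, Finset.mem_filter] at hk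
  obtain ⟨-, hk0, hkm⟩ := hk
  have hfiber : T.filter (fun f => κ f = k)
      = Finset.univ.filter fun f : Fin n → Fin a => ∀ c, Qpred v k c (fun p => f p.1) := by
    ext f
    simp only [hT, Finset.mem_filter, Finset.mem_univ, true_and]
    constructor
    · rintro ⟨hfT, hκf⟩
      have hfmem : f ∈ T := by rw [hT, Finset.mem_filter]; exact ⟨Finset.mem_univ _, hfT⟩
      intro c
      constructor
      · intro p
        cases c using Fin.cases with
        | zero =>
          show ((k 0 : Fin a) : ℕ) ≤ (f p.1 : ℕ)
          rw [← hκf, hκ0 f]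
          exact Nat.zero_le _
        | succ j =>
          show ((k j.succ : Fin a) : ℕ) ≤ (f p.1 : ℕ)
          rw [← hκf, hκsucc f hfmem j]
          have := hlt_blocks f hfT j.castSucc j.succ p.1 p.2 (Fin.castSucc_lt_succ (i := j))
          omega
      · intro hc
        have hidx : (⟨(c : ℕ) + 1, by omega⟩ : Fin (m' + 1)) = (⟨(c : ℕ), hc⟩ : Fin m').succ :=
          rfl
        have hcs : c = (⟨(c : ℕ), hc⟩ : Fin m').castSucc := by
          apply Fin.ext; rfl
        set j : Fin m' := ⟨(c : ℕ), hc⟩ with hj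
        refine ⟨fun p => ?_, ?_⟩
        · show (f p.1 : ℕ) < ((k j.succ : Fin a) : ℕ)
          rw [← hκf, hκsucc f hfmem j]
          have := hMx_le f j.castSucc p.1 (by rw [← hcs]; exact p.2)
          omega
        · obtain ⟨p, hp, hfp⟩ := hMx_mem f j.castSucc
          refine ⟨⟨p, by rw [hcs]; exact hp⟩, ?_⟩
          show (f p : ℕ) = ((k j.succ : Fin a) : ℕ) - 1
          rw [← hκf, hκsucc f hfmem j]
          omega
    · intro hQall
      have hfT : ∀ p q : Fin n, v p < v q → f p < f q := by
        intro p q hpq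
        have hc : (v p : ℕ) < m' := by
          have h1 : (v p : ℕ) < (v q : ℕ) := hpq
          have h2 : (v q : ℕ) ≤ m' := Fin.is_le _
          omega
        have hlt : (f p : ℕ) < (k (v q) : ℕ) := by
          have h1 : (f p : ℕ) < (k ⟨(v p : ℕ) + 1, by omega⟩ : ℕ) :=
            ((hQall (v p)).2 hc).1 ⟨p, rfl⟩
          have h2 : k ⟨(v p : ℕ) + 1, by omega⟩ ≤ k (v q) := by
            apply hkm.monotone
            rw [Fin.le_def]
            exact hpq
          exact lt_of_lt_of_le h1 h2
        have h3 : (k (v q) : ℕ) ≤ (f q : ℕ) := (hQall (v q)).1 ⟨q, rfl⟩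
        rw [Fin.lt_def]
        omega
      refine ⟨hfT, ?_⟩
      have hfmem : f ∈ T := by rw [hT, Finset.mem_filter]; exact ⟨Finset.mem_univ _, hfT⟩
      funext c
      cases c using Fin.cases with
      | zero => rw [hκ0 f, hk0]
      | succ j =>
        apply Fin.ext
        rw [hκsucc_val f j]
        have hc : ((j.castSucc : Fin (m' + 1)) : ℕ) < m' := by
          simpa using j.isLt
        have hidx : (⟨((j.castSucc : Fin (m' + 1)) : ℕ) + 1, by omega⟩ : Fin (m' + 1)) = j.succ := by
          apply Fin.ext; simp
        have hQ := (hQall j.castSucc).2 hc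
        obtain ⟨hub0, ⟨p0, hp00⟩⟩ := hQ
        have hub : ∀ p : {p : Fin n // v p = j.castSucc}, (f p.1 : ℕ) < ((k j.succ : Fin a) : ℕ) :=
          fun p => hub0 p
        have hp0 : (f p0.1 : ℕ) = ((k j.succ : Fin a) : ℕ) - 1 := hp00
        have hMxeq : Mx f j.castSucc = (k j.succ : ℕ) - 1 := by
          apply le_antisymm
          · apply Finset.max'_le
            intro y hy
            rw [Finset.mem_image] at hy
            obtain ⟨q, hq, rfl⟩ := hy
            have h5 : (f q : ℕ) < ((k j.succ : Fin a) : ℕ) :=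
              hub ⟨q, (Finset.mem_filter.mp hq).2⟩
            omega
          · have hmem : ((f p0.1 : ℕ)) ∈ (Finset.univ.filter fun q => v q = j.castSucc).image
                fun q => (f q : ℕ) :=
              Finset.mem_image.mpr ⟨p0.1, Finset.mem_filter.mpr ⟨Finset.mem_univ _, p0.2⟩, rfl⟩
            have h6 : (f p0.1 : ℕ) ≤ Mx f j.castSucc := Finset.le_max' _ _ hmem
            omega
        have hpos : 0 < (k j.succ : ℕ) := by
          have h1 : k 0 < k j.succ := hkm (Fin.succ_pos j)
          rw [Fin.lt_def, hk0] at h1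
          exact h1
        have hle : (k j.succ : ℕ) ≤ a - 1 := by
          have h1 : k j.succ ≤ k (Fin.last m') := hkm.monotone (Fin.le_last _)
          rw [Fin.le_def] at h1
          have h2 : (k (Fin.last m') : ℕ) < a := (k (Fin.last m')).isLt
          omega
        rw [hMxeq]
        omega
  rw [hfiber, card_restrict v (Qpred v k), Fin.prod_univ_castSucc]
  have hcardsub : ∀ c : Fin (m' + 1), Fintype.card {p : Fin n // v p = c} = D c := by
    intro c
    rw [Fintype.card_subtype]
    exact hvD c
  have hlast : (Finset.univ.filter fun h : {p : Fin n // v p = Fin.last m'} → Fin a =>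
      Qpred v k (Fin.last m') h).card = (a - (k (Fin.last m') : ℕ)) ^ (D (Fin.last m')) := by
    have he : (Finset.univ.filter fun h : {p : Fin n // v p = Fin.last m'} → Fin a =>
        Qpred v k (Fin.last m') h)
        = Finset.univ.filter fun h : {p : Fin n // v p = Fin.last m'} → Fin a =>
            ∀ p, (k (Fin.last m') : ℕ) ≤ (h p : ℕ) := by
      apply Finset.filter_congr
      intro h _
      constructor
      · exact fun hh => hh.1
      · intro hh
        refine ⟨hh, fun hc => absurd hc ?_⟩
        simp [Fin.val_last]
    rw [he, card_block_last, hcardsub]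
  have hblock : ∀ j : Fin m', (Finset.univ.filter fun h : {p : Fin n // v p = j.castSucc} → Fin a =>
      Qpred v k j.castSucc h).card
      = ((k j.succ : ℕ) - (k j.castSucc : ℕ)) ^ (D j.castSucc)
        - ((k j.succ : ℕ) - (k j.castSucc : ℕ) - 1) ^ (D j.castSucc) := by
    intro j
    haveI : Nonempty {p : Fin n // v p = j.castSucc} := by
      obtain ⟨p, hp⟩ := hbne j.castSucc
      exact ⟨⟨p, (Finset.mem_filter.mp hp).2⟩⟩
    have hc : ((j.castSucc : Fin (m' + 1)) : ℕ) < m' := by simpa using j.isLt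
    have hidx : (⟨((j.castSucc : Fin (m' + 1)) : ℕ) + 1, by omega⟩ : Fin (m' + 1)) = j.succ := by
      apply Fin.ext; simp
    have he : (Finset.univ.filter fun h : {p : Fin n // v p = j.castSucc} → Fin a =>
        Qpred v k j.castSucc h)
        = Finset.univ.filter fun h : {p : Fin n // v p = j.castSucc} → Fin a =>
            ((∀ p, ((k j.castSucc : ℕ)) ≤ (h p : ℕ)) ∧ (∀ p, (h p : ℕ) < (k j.succ : ℕ)) ∧
              (∃ p, (h p : ℕ) = (k j.succ : ℕ) - 1)) := by
      apply Finset.filter_congr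
      intro h _
      unfold Qpred
      constructor
      · rintro ⟨h1, h2⟩
        exact ⟨h1, (h2 hc).1, (h2 hc).2⟩
      · rintro ⟨h1, h2, h3⟩
        exact ⟨h1, fun _ => ⟨h2, h3⟩⟩
    rw [he, card_block ((k j.castSucc : Fin a) : ℕ) ((k j.succ : Fin a) : ℕ) (k j.succ).isLt.le, hcardsub]
  rw [hlast, Finset.prod_congr rfl (fun j _ => hblock j), mul_comm]
theorem separation_distance_sorted_deck (m : ℕ) (hm : 1 ≤ m) (D : Fin m → ℕ)
    (hD : ∀ c, 1 ≤ D c) (n : ℕ) (hn : n = ∑ c, D c) (a : ℕ) (ha : 1 ≤ a)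
    (σ : (Fin n → Fin a) → Equiv.Perm (Fin n)) (hσ : ∀ f, IsStableSort f (σ f))
    (v : Fin n → Fin m) (hv : Monotone v)
    (hvD : ∀ c, (Finset.univ.filter fun p => v p = c).card = D c) :
    (Finset.univ.filter fun w : Fin n → Fin m =>
        ∀ c, (Finset.univ.filter fun p => w p = c).card = D c).sup'
      ⟨v, Finset.mem_filter.mpr ⟨Finset.mem_univ v, hvD⟩⟩
      (fun w => 1 - (Nat.multinomial Finset.univ D : ℚ) *
        (((Finset.univ.filter fun f : Fin n → Fin a => w ∘ σ f = v).card : ℚ) / (a : ℚ) ^ n))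
    = 1 - (Nat.multinomial Finset.univ D : ℚ) / (a : ℚ) ^ n *
        ((∑ k ∈ Finset.univ.filter
            (fun k : Fin m → Fin a => k ⟨0, by omega⟩ = ⟨0, by omega⟩ ∧ StrictMono k),
          (a - (k ⟨m - 1, by omega⟩ : ℕ)) ^ (D ⟨m - 1, by omega⟩) *
            ∏ j : Fin (m - 1),
              (((k ⟨j.val + 1, by have := j.isLt; omega⟩ : ℕ)
                  - (k ⟨j.val, by have := j.isLt; omega⟩ : ℕ)) ^ (D ⟨j.val, by have := j.isLt; omega⟩)
                - ((k ⟨j.val + 1, by have := j.isLt; omega⟩ : ℕ)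
                  - (k ⟨j.val, by have := j.isLt; omega⟩ : ℕ) - 1) ^ (D ⟨j.val, by have := j.isLt; omega⟩)) : ℕ) : ℚ) := by
  classical
  obtain ⟨m', rfl⟩ : ∃ m', m = m' + 1 := ⟨m - 1, by omega⟩
  have hTcard : ∀ w : Fin n → Fin (m' + 1),
      (∀ c, (Finset.univ.filter fun p => w p = c).card = D c) →
      (Finset.univ.filter fun f : Fin n → Fin a =>
        ∀ p q : Fin n, w p < w q → f p < f q).card
      = ∑ k ∈ Finset.univ.filter
          (fun k : Fin (m' + 1) → Fin a => k 0 = ⟨0, ha⟩ ∧ StrictMono k),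
          (a - (k (Fin.last m') : ℕ)) ^ (D (Fin.last m')) *
            ∏ j : Fin m', (((k j.succ : ℕ) - (k j.castSucc : ℕ)) ^ (D j.castSucc)
              - ((k j.succ : ℕ) - (k j.castSucc : ℕ) - 1) ^ (D j.castSucc)) :=
    fun w hw => count_T ha D hD w hw
  set S : ℕ := ∑ k ∈ Finset.univ.filter
      (fun k : Fin (m' + 1) → Fin a => k 0 = ⟨0, ha⟩ ∧ StrictMono k),
      (a - (k (Fin.last m') : ℕ)) ^ (D (Fin.last m')) *
        ∏ j : Fin m', (((k j.succ : ℕ) - (k j.castSucc : ℕ)) ^ (D j.castSucc)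
          - ((k j.succ : ℕ) - (k j.castSucc : ℕ) - 1) ^ (D j.castSucc)) with hSdef
  have hvalid : ∀ (w : Fin n → Fin (m' + 1)),
      (∀ c, (Finset.univ.filter fun p => w p = c).card = D c) →
      ∀ f : Fin n → Fin a, (w ∘ σ f = v ↔
        ∀ p q : Fin n, w q < w p → (f q < f p ∨ (f q = f p ∧ q < p))) := by
    intro w hw f
    constructor
    · intro he
      refine (mono_comp_iff (hσ f) w).mp ?_
      rw [he]; exact hv
    · intro hcond
      have hmono := (mono_comp_iff (hσ f) w).mpr hcond
      exact mono_unique hmono hv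
        (fun c => ((fiber_comp w (σ f) c).trans (hw c)).trans (hvD c).symm)
  have hsubset : ∀ (w : Fin n → Fin (m' + 1)),
      (∀ c, (Finset.univ.filter fun p => w p = c).card = D c) →
      S ≤ (Finset.univ.filter fun f : Fin n → Fin a => w ∘ σ f = v).card := by
    intro w hw
    rw [← hTcard w hw]
    apply Finset.card_le_card
    intro f hf
    rw [Finset.mem_filter] at hf ⊢
    refine ⟨Finset.mem_univ _, ?_⟩
    exact (hvalid w hw f).mpr (fun p q hlt => Or.inl (hf.2 q p hlt))
  have hwstD : ∀ c, (Finset.univ.filter fun p => (v ∘ Fin.rev) p = c).card = D c := by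
    intro c
    rw [← hvD c]
    exact fiber_comp v Fin.revPerm c
  have hwst_eq : (Finset.univ.filter
      fun f : Fin n → Fin a => (v ∘ Fin.rev) ∘ σ f = v).card = S := by
    rw [← hTcard (v ∘ Fin.rev) hwstD]
    congr 1
    ext f
    simp only [Finset.mem_filter, Finset.mem_univ, true_and]
    rw [hvalid (v ∘ Fin.rev) hwstD f]
    constructor
    · intro hcond p q hlt
      rcases hcond q p hlt with h1 | ⟨h1, h2⟩
      · exact h1
      · exfalso
        have hle : (v ∘ Fin.rev) q ≤ (v ∘ Fin.rev) p := hv (Fin.rev_le_rev.mpr h2.le)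
        exact absurd hlt (not_lt.mpr hle)
    · exact fun hT p q hlt => Or.inl (hT q p hlt)
  have hapos : (0 : ℚ) < (a : ℚ) ^ n := by
    have : (0 : ℚ) < (a : ℚ) := by exact_mod_cast ha
    positivity
  apply le_antisymm
  · apply Finset.sup'_le
    intro w hw
    rw [Finset.mem_filter] at hw
    have h1 : (S : ℚ) ≤ ((Finset.univ.filter
        fun f : Fin n → Fin a => w ∘ σ f = v).card : ℚ) :=
      Nat.cast_le.mpr (hsubset w hw.2)
    show 1 - (Nat.multinomial Finset.univ D : ℚ) *
        (((Finset.univ.filter fun f : Fin n → Fin a => w ∘ σ f = v).card : ℚ) / (a : ℚ) ^ n)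
      ≤ 1 - (Nat.multinomial Finset.univ D : ℚ) / (a : ℚ) ^ n * (S : ℚ)
    have he : 1 - (Nat.multinomial Finset.univ D : ℚ) / (a : ℚ) ^ n * (S : ℚ)
        = 1 - (Nat.multinomial Finset.univ D : ℚ) * ((S : ℚ) / (a : ℚ) ^ n) := by
      ring
    rw [he]
    gcongr
  · have hmem : (v ∘ Fin.rev) ∈ Finset.univ.filter
        (fun w : Fin n → Fin (m' + 1) =>
          ∀ c, (Finset.univ.filter fun p => w p = c).card = D c) :=
      Finset.mem_filter.mpr ⟨Finset.mem_univ _, hwstD⟩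
    refine le_trans (le_of_eq ?_) (Finset.le_sup' _ hmem)
    show 1 - (Nat.multinomial Finset.univ D : ℚ) / (a : ℚ) ^ n * (S : ℚ)
      = 1 - (Nat.multinomial Finset.univ D : ℚ) *
        (((Finset.univ.filter
          fun f : Fin n → Fin a => (v ∘ Fin.rev) ∘ σ f = v).card : ℚ) / (a : ℚ) ^ n)
    rw [hwst_eq]
    ring
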